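/- Let q be a prime power with q odd (i.e. F_q has odd characteristic). For every n ≥ 1, a uniformly random n×n matrix A ∈ F_q^{n×n} satisfies Pr[per(A) = 0] ≥ 1/q. -/

import Mathlib

open Matrix Finset

theorem my_permanent_updateColumn_add {n R : Type*} [DecidableEq n] [Fintype n] [CommSemiring R]
    (M : Matrix n n R) (j : n) (u v : n → R) :
    permanent (updateCol M j (u + v)) =
      permanent (updateCol M j u) + permanent (updateCol M j v) := by
  simp only [permanent]
  rw [← Finset.sum_add_distrib]
  refine Finset.sum_congr rfl fun p _ => ?_
  rw [← Finset.mul_prod_erase _ _ (Finset.mem_univ j),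
      ← Finset.mul_prod_erase _ (fun i => (updateCol M j u) (p i) i) (Finset.mem_univ j),
      ← Finset.mul_prod_erase _ (fun i => (updateCol M j v) (p i) i) (Finset.mem_univ j)]
  have h1 : ∀ w : n → R, ∏ i ∈ Finset.univ.erase j, (updateCol M j w) (p i) i
      = ∏ i ∈ Finset.univ.erase j, M (p i) i := fun w =>
    Finset.prod_congr rfl fun i hi => updateCol_ne (Finset.ne_of_mem_erase hi)
  rw [h1, h1, h1]
  simp [add_mul]

theorem my_permanent_updateRow_add {n R : Type*} [DecidableEq n] [Fintype n] [CommSemiring R]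
    (M : Matrix n n R) (j : n) (u v : n → R) :
    permanent (updateRow M j (u + v)) =
      permanent (updateRow M j u) + permanent (updateRow M j v) := by
  rw [← permanent_transpose, ← updateCol_transpose, my_permanent_updateColumn_add,
    updateCol_transpose, permanent_transpose, updateCol_transpose, permanent_transpose]

theorem row_count (F : Type*) [Field F] [Fintype F] [DecidableEq F] (n : ℕ) [NeZero n]
    (M : Matrix (Fin n) (Fin n) F) :
    Fintype.card F ^ n ≤
      Fintype.card F * Fintype.card {v : Fin n → F // (updateRow M 0 v).permanent = 0} := by
  classical
  let L : (Fin n → F) →ₗ[F] F :=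
    { toFun := fun v => (updateRow M 0 v).permanent
      map_add' := fun u v => my_permanent_updateRow_add M 0 u v
      map_smul' := fun c u => permanent_updateRow_smul M 0 c u }
  have hcard : Nat.card (Fin n → F) = Nat.card (LinearMap.ker L) *
      Nat.card ((Fin n → F) ⧸ LinearMap.ker L) :=
    Submodule.card_eq_card_quotient_mul_card _
  have hq : Nat.card ((Fin n → F) ⧸ LinearMap.ker L) = Nat.card (LinearMap.range L) :=
    Nat.card_congr L.quotKerEquivRange.toEquiv
  have hr : Nat.card (LinearMap.range L) ≤ Nat.card F :=
    Nat.card_le_card_of_injective _ Subtype.val_injective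
  have hk : Fintype.card {v : Fin n → F // (updateRow M 0 v).permanent = 0}
      = Nat.card (LinearMap.ker L) := by
    rw [Nat.card_eq_fintype_card]
    exact Fintype.card_congr (Equiv.subtypeEquivRight fun v => by simp [LinearMap.mem_ker, L])
  have hdom : Nat.card (Fin n → F) = Fintype.card F ^ n := by
    simp [Nat.card_eq_fintype_card]
  calc Fintype.card F ^ n = Nat.card (LinearMap.ker L) *
      Nat.card ((Fin n → F) ⧸ LinearMap.ker L) := by rw [← hcard, hdom]
    _ ≤ Nat.card (LinearMap.ker L) * Nat.card F := by
        rw [hq]; exact Nat.mul_le_mul_left _ hr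
    _ = Fintype.card F * Fintype.card {v : Fin n → F // (updateRow M 0 v).permanent = 0} := by
        rw [hk, Nat.card_eq_fintype_card (α := F)]; ring

theorem matrix_count (F : Type*) [Field F] [Fintype F] [DecidableEq F] (n : ℕ) [NeZero n] :
    Fintype.card F ^ (n * n) ≤
      Fintype.card F * Fintype.card {A : Matrix (Fin n) (Fin n) F // A.permanent = 0} := by
  classical
  set q := Fintype.card F with hq
  let e : (Fin n → Fin n → F) ≃ (Fin n → F) × ({ j : Fin n // j ≠ 0 } → Fin n → F) :=
    Equiv.funSplitAt (0 : Fin n) (Fin n → F)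
  -- rewrite symm as updateRow
  have hsymm : ∀ (v : Fin n → F) (B : { j : Fin n // j ≠ 0 } → Fin n → F),
      (e.symm (v, B) : Matrix (Fin n) (Fin n) F)
        = updateRow (e.symm (0, B) : Matrix (Fin n) (Fin n) F) 0 v := by
    intro v B
    funext j
    by_cases h : j = 0
    · subst h; simp [e, Matrix.updateRow]
      exact (Function.update_self (β := fun _ => Fin n → F) (0 : Fin n) v (e.symm (0, B))).symm
    · simp [e, Matrix.updateRow, Equiv.funSplitAt_symm_apply, h]
      refine Eq.trans ?_ (Function.update_of_ne (β := fun _ => Fin n → F) h v _).symm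
      simp [Equiv.funSplitAt_symm_apply, h]
  -- card of subtype over pairs
  have hcongr : Fintype.card {A : Matrix (Fin n) (Fin n) F // A.permanent = 0}
      = Fintype.card {p : (Fin n → F) × ({ j : Fin n // j ≠ 0 } → Fin n → F) //
          Matrix.permanent (e.symm p) = 0} := by
    refine Fintype.card_congr (Equiv.subtypeEquiv e fun A => ?_)
    exact (iff_of_eq (congrArg (fun M => Matrix.permanent M = 0) (e.symm_apply_apply A))).symm
  have hsigma : Fintype.card {p : (Fin n → F) × ({ j : Fin n // j ≠ 0 } → Fin n → F) //
          Matrix.permanent (e.symm p) = 0}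
      = ∑ B : { j : Fin n // j ≠ 0 } → Fin n → F,
          Fintype.card {v : Fin n → F //
            (updateRow (e.symm (0, B) : Matrix (Fin n) (Fin n) F) 0 v).permanent = 0} := by
    rw [Fintype.card_subtype, Finset.card_filter, Fintype.sum_prod_type_right]
    refine Finset.sum_congr rfl fun B _ => ?_
    rw [Fintype.card_subtype, Finset.card_filter]
    refine Finset.sum_congr rfl fun v _ => ?_
    rw [hsymm v B]
  calc q ^ (n * n) = Fintype.card (Fin n → Fin n → F) := by
        simp [Fintype.card_fun, pow_mul, hq]
    _ = Fintype.card ((Fin n → F) × ({ j : Fin n // j ≠ 0 } → Fin n → F)) :=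
        Fintype.card_congr e
    _ = q ^ n * Fintype.card ({ j : Fin n // j ≠ 0 } → Fin n → F) := by
        simp [Fintype.card_prod, Fintype.card_fun, hq]
    _ = ∑ _B : { j : Fin n // j ≠ 0 } → Fin n → F, q ^ n := by
        rw [Finset.sum_const, smul_eq_mul, mul_comm, Finset.card_univ]
    _ ≤ ∑ B : { j : Fin n // j ≠ 0 } → Fin n → F,
          q * Fintype.card {v : Fin n → F //
            (updateRow (e.symm (0, B) : Matrix (Fin n) (Fin n) F) 0 v).permanent = 0} :=
        Finset.sum_le_sum fun B _ => row_count F n _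
    _ = q * Fintype.card {A : Matrix (Fin n) (Fin n) F // A.permanent = 0} := by
        rw [← Finset.mul_sum, ← hsigma, ← hcongr]

/-- For a finite field `F` of odd characteristic (i.e. odd order `q`) and any `n ≥ 1`,
a uniformly random `n × n` matrix over `F` satisfies `Pr[per A = 0] ≥ 1/q`. -/
theorem permanent_zero_probability_lower_bound (F : Type*) [Field F] [Fintype F]
    (hodd : Odd (Fintype.card F)) (n : ℕ) (hn : 1 ≤ n) :
    (1 : ℝ) / (Fintype.card F : ℝ) ≤
      (Nat.card {A : Matrix (Fin n) (Fin n) F // A.permanent = 0} : ℝ) /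
        (Fintype.card F : ℝ) ^ (n ^ 2) := by
  classical
  have hnz : NeZero n := ⟨by omega⟩
  have hq0 : 0 < Fintype.card F := Fintype.card_pos
  have hnat : Fintype.card F ^ (n * n) ≤
      Fintype.card F * Fintype.card {A : Matrix (Fin n) (Fin n) F // A.permanent = 0} :=
    matrix_count F n
  rw [Nat.card_eq_fintype_card]
  rw [div_le_div_iff₀ (by positivity) (by positivity)]
  have hcast : ((Fintype.card F : ℝ)) ^ (n * n) ≤
      (Fintype.card F : ℝ) *
        (Fintype.card {A : Matrix (Fin n) (Fin n) F // A.permanent = 0} : ℝ) := by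
    exact_mod_cast hnat
  rw [show n ^ 2 = n * n from pow_two n]
  linarith
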